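/- Let G be a group satisfying Condition MAX: every infinite cyclic subgroup of G is contained in a unique maximal virtually cyclic subgroup of G. Then G satisfies Condition A: for every automorphism φ of G and every infinite-order element h of G, the relation φ(h^m) = h^n with m, n nonzero integers implies |m| = |n|. -/

import Mathlib

def ConditionA (N : Type*) [Group N] : Prop :=
  ∀ φ : N ≃* N, ∀ g : N, ¬ IsOfFinOrder g → ∀ k l : ℤ, k ≠ 0 → l ≠ 0 →
    φ (g ^ k) = g ^ l → |k| = |l|

/-- A group is virtually cyclic if it has a cyclic subgroup of finite index. -/
def IsVirtuallyCyclic (G : Type*) [Group G] : Prop :=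
  ∃ H : Subgroup G, IsCyclic H ∧ H.FiniteIndex

/-- Condition MAX: every infinite cyclic subgroup is contained in a unique maximal
virtually cyclic subgroup. -/
def ConditionMAX (G : Type*) [Group G] : Prop :=
  ∀ h : G, ¬ IsOfFinOrder h →
    ∃! M : Subgroup G, IsVirtuallyCyclic M ∧ Subgroup.zpowers h ≤ M ∧
      ∀ M' : Subgroup G, IsVirtuallyCyclic M' → M ≤ M' → M = M'

/-- Index of the cyclic subgroup generated by a power. -/
lemma aux_index_zpowers_zpow {N : Type*} [Group N] {g : N} (hg : ¬ IsOfFinOrder g) (k : ℤ) :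
    (Subgroup.zpowers (g ^ k)).index = k.natAbs * (Subgroup.zpowers g).index := by
  set f : Multiplicative ℤ →* N := zpowersHom N g with hf
  have hzi : Function.Injective fun n : ℤ => g ^ n := injective_zpow_iff_not_isOfFinOrder.mpr hg
  have hinj : Function.Injective f := fun a b hab =>
    Multiplicative.toAdd.injective (hzi hab)
  have hrange : f.range = Subgroup.zpowers g := by
    ext x
    constructor
    · rintro ⟨n, rfl⟩
      exact ⟨Multiplicative.toAdd n, rfl⟩
    · rintro ⟨n, rfl⟩
      exact ⟨Multiplicative.ofAdd n, rfl⟩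
  have hmap : (Subgroup.zpowers (Multiplicative.ofAdd k)).map f = Subgroup.zpowers (g ^ k) := by
    rw [MonoidHom.map_zpowers]
    rfl
  have hidx : (Subgroup.zpowers (Multiplicative.ofAdd k)).index = k.natAbs := by
    have he : Subgroup.zpowers (Multiplicative.ofAdd k)
        = AddSubgroup.toSubgroup (AddSubgroup.zmultiples k) := by
      ext m
      constructor
      · rintro ⟨n, rfl⟩
        exact ⟨n, (toAdd_zpow _ _).symm⟩
      · rintro ⟨n, hn⟩
        exact ⟨n, Multiplicative.toAdd.injective (by rw [toAdd_zpow]; exact hn)⟩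
    rw [he, AddSubgroup.index_toSubgroup, Int.index_zmultiples]
  rw [← hmap, Subgroup.index_map_of_injective _ hinj, hrange, hidx]

/-- Virtual cyclicity transfers along a group isomorphism. -/
lemma aux_vc_mulEquiv {N P : Type*} [Group N] [Group P] (e : N ≃* P)
    (h : IsVirtuallyCyclic N) : IsVirtuallyCyclic P := by
  obtain ⟨H, hc, hfi⟩ := h
  refine ⟨H.map (e : N →* P), ?_, ?_⟩
  · exact isCyclic_of_surjective (e.subgroupMap H) (e.subgroupMap H).surjective
  · refine ⟨?_⟩
    rw [Subgroup.index_map_eq _ e.surjective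
      (by rw [(MonoidHom.ker_eq_bot_iff _).mpr e.injective]; exact bot_le)]
    exact hfi.index_ne_zero

/-- In a virtually cyclic group, the cyclic subgroup generated by an infinite-order
element has finite index. -/
lemma aux_zpowers_finiteIndex {N : Type*} [Group N] (hvc : IsVirtuallyCyclic N)
    {h : N} (hh : ¬ IsOfFinOrder h) : (Subgroup.zpowers h).FiniteIndex := by
  obtain ⟨C, hC, hCfi⟩ := hvc
  have hpinj : Function.Injective fun n : ℕ => h ^ n := injective_pow_iff_not_isOfFinOrder.mpr hh
  have hzinj : Function.Injective fun n : ℤ => h ^ n := injective_zpow_iff_not_isOfFinOrder.mpr hh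
  -- the subgroup Z = zpowers h is infinite
  set Z := Subgroup.zpowers h with hZ
  have hZinf : Infinite Z := by
    refine Infinite.of_injective (fun n : ℕ => ⟨h ^ n, n, zpow_natCast h n⟩) ?_
    intro a b hab
    exact hpinj (congrArg Subtype.val hab)
  -- the intersection with C is a finite-index subgroup of Z, so infinite, so nontrivial
  have hK : (C.subgroupOf Z).FiniteIndex := inferInstance
  have hKinf : Nat.card (C.subgroupOf Z) ≠ 1 ∨ True := Or.inr trivial
  have hexists : ∃ m : ℤ, m ≠ 0 ∧ h ^ m ∈ C := by
    rcases (C.subgroupOf Z).bot_or_exists_ne_one with hbot | ⟨x, hxK, hx1⟩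
    · exfalso
      have hcard := Subgroup.card_mul_index (⊥ : Subgroup Z)
      rw [Subgroup.card_bot, one_mul, Nat.card_eq_zero_of_infinite] at hcard
      exact (hbot ▸ hK).index_ne_zero hcard
    · obtain ⟨m, hm⟩ := (x : Z).2
      refine ⟨m, ?_, ?_⟩
      · rintro rfl
        apply hx1
        apply Subtype.ext
        simpa using hm.symm
      · have : ((x : Z) : N) ∈ C := hxK
        rwa [← hm] at this
  obtain ⟨m, hm0, hmC⟩ := hexists
  -- h^m has infinite order
  have hhm : ¬ IsOfFinOrder (h ^ m) := by
    intro hf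
    obtain ⟨n, hn0, hn⟩ := isOfFinOrder_iff_pow_eq_one.mp hf
    have : h ^ (m * (n : ℤ)) = h ^ (0 : ℤ) := by
      rw [zpow_mul, zpow_natCast, hn, zpow_zero]
    have := hzinj this
    have : m * (n : ℤ) = 0 := this
    rcases mul_eq_zero.mp this with h1 | h2
    · exact hm0 h1
    · exact hn0.ne' (by exact_mod_cast h2)
  -- work inside C: the element h^m viewed in C
  set x' : C := ⟨h ^ m, hmC⟩ with hx'
  have hx'inf : ¬ IsOfFinOrder x' := by
    intro hf
    apply hhm
    obtain ⟨n, hn0, hn⟩ := isOfFinOrder_iff_pow_eq_one.mp hf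
    exact isOfFinOrder_iff_pow_eq_one.mpr ⟨n, hn0, by
      have := congrArg (Subtype.val) hn
      simpa using this⟩
  obtain ⟨c, hc⟩ := hC
  obtain ⟨j, hj⟩ := hc x'
  have hj0 : j ≠ 0 := by
    rintro rfl
    apply hx'inf
    have hx1 : x' = 1 := by rw [← hj]; exact zpow_zero c
    rw [hx1]
    exact IsOfFinOrder.one
  have hcinf : ¬ IsOfFinOrder c := by
    intro hf
    exact hx'inf (hj ▸ hf.zpow)
  -- index of zpowers x' in C is j.natAbs
  have htop : Subgroup.zpowers c = ⊤ := by
    rw [eq_top_iff]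
    intro y _
    exact hc y
  have hidxC : (Subgroup.zpowers x').index = j.natAbs := by
    rw [← hj, aux_index_zpowers_zpow hcinf, htop, Subgroup.index_top, mul_one]
  -- identify zpowers x' with the subgroupOf
  have hsub : (Subgroup.zpowers (h ^ m)).subgroupOf C = Subgroup.zpowers x' := by
    ext y
    constructor
    · rintro hy
      obtain ⟨n, hn⟩ := hy
      exact ⟨n, by apply Subtype.ext; rw [SubgroupClass.coe_zpow]; exact hn⟩
    · rintro ⟨n, rfl⟩
      exact ⟨n, by simp; rfl⟩
  have hle : Subgroup.zpowers (h ^ m) ≤ C := Subgroup.zpowers_le.mpr hmC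
  have hrel : (Subgroup.zpowers (h ^ m)).relIndex C = j.natAbs := by
    rw [Subgroup.relIndex, hsub, hidxC]
  have hidxm : (Subgroup.zpowers (h ^ m)).index ≠ 0 := by
    rw [← Subgroup.relIndex_mul_index hle, hrel]
    exact Nat.mul_ne_zero (Int.natAbs_ne_zero.mpr hj0) hCfi.index_ne_zero
  -- conclude
  rw [aux_index_zpowers_zpow hh m] at hidxm
  exact ⟨fun h0 => hidxm (by rw [h0, mul_zero])⟩

/-- Condition A holds once the relevant cyclic subgroup has finite index. -/
lemma aux_condA_of_finiteIndex {N : Type*} [Group N] (ψ : N ≃* N) {g : N}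
    (hg : ¬ IsOfFinOrder g) (hfi : (Subgroup.zpowers g).FiniteIndex)
    {k l : ℤ} (_hk : k ≠ 0) (_hl : l ≠ 0) (heq : ψ (g ^ k) = g ^ l) : |k| = |l| := by
  have h1 : (Subgroup.zpowers (g ^ k)).map (ψ : N →* N) = Subgroup.zpowers (g ^ l) := by
    rw [MonoidHom.map_zpowers]
    exact congrArg _ heq
  have h2 : ((Subgroup.zpowers (g ^ k)).map (ψ : N →* N)).index
      = (Subgroup.zpowers (g ^ k)).index :=
    Subgroup.index_map_eq _ ψ.surjective
      (by rw [(MonoidHom.ker_eq_bot_iff _).mpr ψ.injective]; exact bot_le)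
  rw [h1, aux_index_zpowers_zpow hg, aux_index_zpowers_zpow hg] at h2
  have := Nat.eq_of_mul_eq_mul_right (Nat.pos_of_ne_zero hfi.index_ne_zero) h2
  rw [Int.abs_eq_natAbs, Int.abs_eq_natAbs, this]

theorem conditionA_of_conditionMAX {G : Type*} [Group G] (hmax : ConditionMAX G) :
    ConditionA G := by
  intro φ h hh k l hk hl heq
  have hzinj : Function.Injective fun n : ℤ => h ^ n := injective_zpow_iff_not_isOfFinOrder.mpr hh
  have hhl : ¬ IsOfFinOrder (h ^ l) := by
    intro hf
    obtain ⟨n, hn0, hn⟩ := isOfFinOrder_iff_pow_eq_one.mp hf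
    have : h ^ (l * (n : ℤ)) = h ^ (0 : ℤ) := by
      rw [zpow_mul, zpow_natCast, hn, zpow_zero]
    have : l * (n : ℤ) = 0 := hzinj this
    rcases mul_eq_zero.mp this with h1 | h2
    · exact hl h1
    · exact hn0.ne' (by exact_mod_cast h2)
  obtain ⟨M, ⟨hMvc, hMle, hMmax⟩, -⟩ := hmax h hh
  obtain ⟨Ml, -, huniq⟩ := hmax (h ^ l) hhl
  have hMl : Subgroup.zpowers (h ^ l) ≤ M :=
    Subgroup.zpowers_le.mpr (hMle ⟨l, rfl⟩)
  have hM1 : M = Ml := huniq M ⟨hMvc, hMl, hMmax⟩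
  set Mφ := M.map (φ : G →* G) with hMφ
  have hMφvc : IsVirtuallyCyclic Mφ := aux_vc_mulEquiv (φ.subgroupMap M) hMvc
  have hMφle : Subgroup.zpowers (h ^ l) ≤ Mφ :=
    Subgroup.zpowers_le.mpr ⟨h ^ k, hMle ⟨k, rfl⟩, heq⟩
  have hMφmax : ∀ M' : Subgroup G, IsVirtuallyCyclic M' → Mφ ≤ M' → Mφ = M' := by
    intro M' hM' hle2
    have hcle : M ≤ M'.comap (φ : G →* G) := Subgroup.map_le_iff_le_comap.mp hle2
    have hceq : M'.comap (φ : G →* G) = M'.map (φ.symm : G →* G) :=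
      Subgroup.comap_equiv_eq_map_symm φ M'
    have hvc' : IsVirtuallyCyclic (M'.map (φ.symm : G →* G)) :=
      aux_vc_mulEquiv (φ.symm.subgroupMap M') hM'
    have hMeq : M = M'.comap (φ : G →* G) :=
      hMmax _ (hceq ▸ hvc') hcle
    rw [hMφ, hMeq, Subgroup.map_comap_eq_self_of_surjective φ.surjective]
  have hMM : Mφ = M := (huniq Mφ ⟨hMφvc, hMφle, hMφmax⟩).trans hM1.symm
  set ψ : M ≃* M := (φ.subgroupMap M).trans (MulEquiv.subgroupCongr hMM) with hψdef
  set h' : M := ⟨h, hMle (Subgroup.mem_zpowers h)⟩ with hh'def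
  have hh' : ¬ IsOfFinOrder h' := by
    intro hf
    apply hh
    obtain ⟨n, hn0, hn⟩ := isOfFinOrder_iff_pow_eq_one.mp hf
    exact isOfFinOrder_iff_pow_eq_one.mpr ⟨n, hn0, by
      have := congrArg Subtype.val hn
      simpa using this⟩
  have hMvc' : IsVirtuallyCyclic M := hMvc
  have hfi := aux_zpowers_finiteIndex hMvc' hh'
  have hψ : ψ (h' ^ k) = h' ^ l := by
    apply Subtype.ext
    have hcoe : ((ψ (h' ^ k) : M) : G) = φ (((h' ^ k : M) : G)) := rfl
    rw [hcoe, SubgroupClass.coe_zpow, SubgroupClass.coe_zpow]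
    exact heq
  exact aux_condA_of_finiteIndex ψ hh' hfi hk hl hψ
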